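/- For any SEP instance and any escape assignment, the density of the assignment is at most 4 times its boundary density: if some grid point lies on D of the chosen escape paths, then some boundary grid point lies on at least ⌈D/4⌉ of the chosen escape paths. In particular, the minimum density k and the minimum boundary density k_B satisfy k_B ≥ k/4. -/

import Mathlib

/-- One of the four axis-aligned escape directions. -/
inductive Dir | left | right | up | down
deriving DecidableEq

instance : Fintype Dir where
  elems := {Dir.left, Dir.right, Dir.up, Dir.down}
  complete := by intro x; cases x <;> simp

/-- `q` is a point of the grid `{1,…,N} × {1,…,N}`. -/
def inGrid (N : ℕ) (q : ℕ × ℕ) : Prop := 1 ≤ q.1 ∧ q.1 ≤ N ∧ 1 ≤ q.2 ∧ q.2 ≤ N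

/-- `q` is a boundary grid point: a grid point with some coordinate equal to `1` or `N`. -/
def onBoundary (N : ℕ) (q : ℕ × ℕ) : Prop :=
  inGrid N q ∧ (q.1 = 1 ∨ q.1 = N ∨ q.2 = 1 ∨ q.2 = N)

/-- The escape path of a grid point in a given direction. -/
def sepPath (N : ℕ) (p : ℕ × ℕ) : Dir → Set (ℕ × ℕ)
  | Dir.right => {q | q.2 = p.2 ∧ p.1 ≤ q.1 ∧ q.1 ≤ N}
  | Dir.left  => {q | q.2 = p.2 ∧ 1 ≤ q.1 ∧ q.1 ≤ p.1}
  | Dir.up    => {q | q.1 = p.1 ∧ p.2 ≤ q.2 ∧ q.2 ≤ N}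
  | Dir.down  => {q | q.1 = p.1 ∧ 1 ≤ q.2 ∧ q.2 ≤ p.2}

/-- The endpoint of the escape path of a grid point in a given direction. -/
def sepEnd (N : ℕ) (p : ℕ × ℕ) : Dir → ℕ × ℕ
  | Dir.right => (N, p.2)
  | Dir.left  => (1, p.2)
  | Dir.up    => (p.1, N)
  | Dir.down  => (p.1, 1)

/-- Density at grid point `q` of the escape assignment `σ` for the family of points `R`. -/
noncomputable def sepDensity {n : ℕ} (N : ℕ) (R : Fin n → ℕ × ℕ) (σ : Fin n → Dir)
    (q : ℕ × ℕ) : ℕ :=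
  {i | q ∈ sepPath N (R i) (σ i)}.ncard

/-- The minimum density `k` over all escape assignments. -/
noncomputable def sepOpt {n : ℕ} (N : ℕ) (R : Fin n → ℕ × ℕ) : ℕ :=
  sInf {k | ∃ σ : Fin n → Dir, ∀ q, inGrid N q → sepDensity N R σ q ≤ k}

/-- The minimum boundary density `k_B` over all escape assignments. -/
noncomputable def sepOptB {n : ℕ} (N : ℕ) (R : Fin n → ℕ × ℕ) : ℕ :=
  sInf {k | ∃ σ : Fin n → Dir, ∀ q, onBoundary N q → sepDensity N R σ q ≤ k}

lemma sep_main {n N : ℕ} (hN : 2 ≤ N)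
    (R : Fin n → ℕ × ℕ) (hR : ∀ i, inGrid N (R i)) :
    ∀ σ : Fin n → Dir, ∀ q, inGrid N q →
      ∃ b, onBoundary N b ∧ (sepDensity N R σ q + 3) / 4 ≤ sepDensity N R σ b := by
  intro σ q hq
  classical
  have h1N : (1:ℕ) ≤ N := by omega
  set S : Dir → Set (Fin n) := fun d => {i | q ∈ sepPath N (R i) (σ i) ∧ σ i = d} with hS
  have hsub : ∀ d b, (∀ i, q ∈ sepPath N (R i) d → b ∈ sepPath N (R i) d) →
      (S d).ncard ≤ sepDensity N R σ b := by
    intro d b h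
    apply Set.ncard_le_ncard _ (Set.toFinite _)
    intro i hi
    obtain ⟨h1, h2⟩ := hi
    simp only [Set.mem_setOf_eq]
    rw [h2]
    exact h i (h2 ▸ h1)
  have hcover : sepDensity N R σ q ≤
      (S Dir.left).ncard + (S Dir.right).ncard + (S Dir.up).ncard + (S Dir.down).ncard := by
    have heq : {i | q ∈ sepPath N (R i) (σ i)} =
        (S Dir.left ∪ S Dir.right) ∪ (S Dir.up ∪ S Dir.down) := by
      ext i
      simp only [hS, Set.mem_setOf_eq, Set.mem_union]
      cases h : σ i <;> tauto
    unfold sepDensity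
    rw [heq]
    calc ((S Dir.left ∪ S Dir.right) ∪ (S Dir.up ∪ S Dir.down)).ncard
        ≤ (S Dir.left ∪ S Dir.right).ncard + (S Dir.up ∪ S Dir.down).ncard :=
          Set.ncard_union_le _ _
      _ ≤ ((S Dir.left).ncard + (S Dir.right).ncard) + ((S Dir.up).ncard + (S Dir.down).ncard) :=
          Nat.add_le_add (Set.ncard_union_le _ _) (Set.ncard_union_le _ _)
      _ = _ := by ring
  obtain ⟨hq1, hq2, hq3, hq4⟩ := hq
  have hpig : (sepDensity N R σ q + 3) / 4 ≤ (S Dir.left).ncard ∨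
      (sepDensity N R σ q + 3) / 4 ≤ (S Dir.right).ncard ∨
      (sepDensity N R σ q + 3) / 4 ≤ (S Dir.up).ncard ∨
      (sepDensity N R σ q + 3) / 4 ≤ (S Dir.down).ncard := by omega
  rcases hpig with h | h | h | h
  · refine ⟨(1, q.2), ⟨⟨le_refl 1, h1N, hq3, hq4⟩, Or.inl rfl⟩, le_trans h (hsub _ _ ?_)⟩
    intro i hp
    obtain ⟨hp1, _, _⟩ := hp
    exact ⟨hp1, le_refl 1, (hR i).1⟩
  · refine ⟨(N, q.2), ⟨⟨h1N, le_refl N, hq3, hq4⟩, Or.inr (Or.inl rfl)⟩, le_trans h (hsub _ _ ?_)⟩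
    intro i hp
    obtain ⟨hp1, _, _⟩ := hp
    exact ⟨hp1, (hR i).2.1, le_refl N⟩
  · refine ⟨(q.1, N), ⟨⟨hq1, hq2, h1N, le_refl N⟩, Or.inr (Or.inr (Or.inr rfl))⟩,
      le_trans h (hsub _ _ ?_)⟩
    intro i hp
    obtain ⟨hp1, _, _⟩ := hp
    exact ⟨hp1, (hR i).2.2.2, le_refl N⟩
  · refine ⟨(q.1, 1), ⟨⟨hq1, hq2, le_refl 1, h1N⟩, Or.inr (Or.inr (Or.inl rfl))⟩,
      le_trans h (hsub _ _ ?_)⟩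
    intro i hp
    obtain ⟨hp1, _, _⟩ := hp
    exact ⟨hp1, le_refl 1, (hR i).2.2.1⟩

/-- For any SEP instance and any escape assignment, if a grid point lies on
`D` chosen escape paths then some boundary grid point lies on at least `⌈D/4⌉` of them
(so the density is at most four times the boundary density); in particular `k ≤ 4·k_B`. -/
theorem sep_density_le_four_boundary {n N : ℕ} (hN : 2 ≤ N)
    (R : Fin n → ℕ × ℕ) (hR : ∀ i, inGrid N (R i))
    (k kB : ℕ) (hk : k = sepOpt N R) (hkB : kB = sepOptB N R) :
    (∀ σ : Fin n → Dir, ∀ q, inGrid N q →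
      ∃ b, onBoundary N b ∧ (sepDensity N R σ q + 3) / 4 ≤ sepDensity N R σ b) ∧
    k ≤ 4 * kB := by
  refine ⟨sep_main hN R hR, ?_⟩
  subst hk hkB
  have hbound : ∀ (σ : Fin n → Dir) q, sepDensity N R σ q ≤ n := by
    intro σ q
    calc sepDensity N R σ q ≤ (Set.univ : Set (Fin n)).ncard :=
          Set.ncard_le_ncard (Set.subset_univ _) Set.finite_univ
      _ = n := by simp [Set.ncard_univ]
  have hne : {k | ∃ σ : Fin n → Dir, ∀ q, onBoundary N q → sepDensity N R σ q ≤ k}.Nonempty :=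
    ⟨n, fun _ => Dir.left, fun q _ => hbound _ q⟩
  obtain ⟨σB, hσB⟩ := Nat.sInf_mem hne
  apply Nat.sInf_le
  refine ⟨σB, fun q hq => ?_⟩
  obtain ⟨b, hb, hle⟩ := sep_main hN R hR σB q hq
  have h2 : sepDensity N R σB b ≤ sepOptB N R := hσB b hb
  omega
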